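/- arXiv:1211.4999 — 3 statements merged into one kernel-verified Lean document; each statement's English description precedes it below -/
import Mathlib

section
/- For every nonempty set M ⊆ C and every k ∈ {1,…,m}, p_M^{(k)} = ∑_{j∈M} ∑_{A⊆C, |(M∖A)∪{j}|=k} (−1)^{|{j}∖A|} · q_j(A∖{j}) · φ(A). -/
open MeasureTheory Finset

/-- Lifetime of the (sub)system on component set `D` with structure function `χ`
(the maximum over the sets `A ⊆ D` with `χ A = 1` of `min_{i ∈ A} T i`). -/
noncomputable def sysLifeOn {Ω : Type*} {n : ℕ} (T : Fin n → Ω → ℝ)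
    (D : Finset (Fin n)) (χ : Finset (Fin n) → ℝ) (ω : Ω) : ℝ :=
  if h : (D.powerset.filter fun A => χ A = 1).Nonempty then
    (D.powerset.filter fun A => χ A = 1).sup' h
      (fun A => if hA : A.Nonempty then A.inf' hA fun i => T i ω else 0)
  else 0

/-- The `k`-th order statistic of the lifetimes `(T i)_{i ∈ M}`. -/
noncomputable def orderStat {Ω : Type*} {n : ℕ} (T : Fin n → Ω → ℝ)
    (M : Finset (Fin n)) (k : ℕ) (ω : Ω) : ℝ :=
  ((M.val.map fun i => T i ω).sort (· ≤ ·)).getD (k - 1) 0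

/-- The relative quality function `q_j(A) = Pr(max_{i ∈ C∖A} T_i = T_j < min_{i ∈ A} T_i)`. -/
noncomputable def relQual {Ω : Type*} [MeasurableSpace Ω] {n : ℕ} (μ : Measure Ω)
    (T : Fin n → Ω → ℝ) (j : Fin n) (A : Finset (Fin n)) : ℝ :=
  (μ {ω | (∀ i ∉ A, T i ω ≤ T j ω) ∧ ∀ i ∈ A, T j ω < T i ω}).toReal


section AuxStmt3
variable {Ω : Type*} {n : ℕ}


lemma sorted_nodup_countP (l : List ℝ) (hs : l.Pairwise (· ≤ ·)) (hn : l.Nodup) :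
    ∀ k (hk : k < l.length), l.countP (fun x => decide (x ≤ l.get ⟨k, hk⟩)) = k + 1 := by
  induction l with
  | nil => intro k hk; simp at hk
  | cons a l ih =>
    intro k hk
    have ha : ∀ x ∈ l, a ≤ x := (List.pairwise_cons.mp hs).1
    have hs' := (List.pairwise_cons.mp hs).2
    have hna : a ∉ l := (List.nodup_cons.mp hn).1
    have hn' := (List.nodup_cons.mp hn).2
    cases k with
    | zero =>
      have hget : (a :: l).get ⟨0, hk⟩ = a := rfl
      rw [hget, List.countP_cons]
      have h0 : l.countP (fun x => decide (x ≤ a)) = 0 := by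
        rw [List.countP_eq_zero]
        intro x hx
        simp only [decide_eq_true_eq]
        intro hxa
        exact hna (le_antisymm hxa (ha x hx) ▸ hx)
      simp [h0]
    | succ k =>
      have hk' : k < l.length := by simpa using hk
      have hget : (a :: l).get ⟨k+1, hk⟩ = l.get ⟨k, hk'⟩ := rfl
      rw [hget, List.countP_cons]
      have := ih hs' hn' k hk'
      have hle : a ≤ l.get ⟨k, hk'⟩ := ha _ (l.get_mem _)
      simp only [List.get_eq_getElem] at this hle ⊢
      simp [this, hle]

lemma sorted_nodup_get_eq (l : List ℝ) (hs : l.Pairwise (· ≤ ·)) (hn : l.Nodup) {t : ℝ}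
    (ht : t ∈ l) {k : ℕ} (hk : k < l.length)
    (hc : l.countP (fun x => decide (x ≤ t)) = k + 1) : l.get ⟨k, hk⟩ = t := by
  obtain ⟨⟨m, hm⟩, rfl⟩ := List.mem_iff_get.mp ht
  have h2 := sorted_nodup_countP l hs hn m hm
  rw [hc] at h2
  have : k = m := by omega
  subst this; rfl

lemma orderStat_basic (T : Fin n → Ω → ℝ) (M : Finset (Fin n)) (ω : Ω)
    {k : ℕ} (hk1 : 1 ≤ k) (hkm : k ≤ M.card) :
    ∃ hk' : k - 1 < ((M.val.map fun i => T i ω).sort (· ≤ ·)).length,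
      orderStat T M k ω = ((M.val.map fun i => T i ω).sort (· ≤ ·)).get ⟨k - 1, hk'⟩ := by
  have hlen : ((M.val.map fun i => T i ω).sort (· ≤ ·)).length = M.card := by
    rw [Multiset.length_sort, Multiset.card_map]; rfl
  have hk' : k - 1 < ((M.val.map fun i => T i ω).sort (· ≤ ·)).length := by
    rw [hlen]; omega
  refine ⟨hk', ?_⟩
  rw [orderStat, List.getD_eq_getElem _ _ hk']
  simp [List.get_eq_getElem]

lemma orderStat_mem (T : Fin n → Ω → ℝ) (M : Finset (Fin n)) (ω : Ω)
    {k : ℕ} (hk1 : 1 ≤ k) (hkm : k ≤ M.card) :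
    ∃ j ∈ M, orderStat T M k ω = T j ω := by
  obtain ⟨hk', heq⟩ := orderStat_basic T M ω hk1 hkm
  have hmem : ((M.val.map fun i => T i ω).sort (· ≤ ·)).get ⟨k - 1, hk'⟩
      ∈ (M.val.map fun i => T i ω) := by
    have h3 := List.get_mem _ ⟨_, hk'⟩
    have h4 : ((M.val.map fun i => T i ω).sort (· ≤ ·)).get ⟨k-1, hk'⟩
        ∈ ((((M.val.map fun i => T i ω)).sort (· ≤ ·) : List ℝ) : Multiset ℝ) :=
      Multiset.mem_coe.mpr h3
    rwa [Multiset.sort_eq] at h4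
  obtain ⟨j, hj, hje⟩ := Multiset.mem_map.mp hmem
  exact ⟨j, hj, by rw [heq, ← hje]⟩

lemma countP_eq_filter_card (T : Fin n → Ω → ℝ) (M : Finset (Fin n)) (ω : Ω) (t : ℝ) :
    ((M.val.map fun i => T i ω).sort (· ≤ ·)).countP (fun x => decide (x ≤ t))
      = (M.filter fun i => T i ω ≤ t).card := by
  classical
  have h1 : ((M.val.map fun i => T i ω).sort (· ≤ ·)).countP (fun x => decide (x ≤ t))
      = Multiset.countP (fun x => x ≤ t) (M.val.map fun i => T i ω) := by
    conv_rhs => rw [← Multiset.sort_eq (M.val.map fun i => T i ω) (· ≤ ·)]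
    rw [Multiset.coe_countP]
  rw [h1, Multiset.countP_map]
  rfl

lemma orderStat_eq_iff (T : Fin n → Ω → ℝ) (M : Finset (Fin n)) (ω : Ω)
    (hinj : Function.Injective fun i => T i ω) {j : Fin n} (hj : j ∈ M)
    {k : ℕ} (hk1 : 1 ≤ k) (hkm : k ≤ M.card) :
    orderStat T M k ω = T j ω ↔ (M.filter fun i => T i ω ≤ T j ω).card = k := by
  obtain ⟨hk', heq⟩ := orderStat_basic T M ω hk1 hkm
  set l := (M.val.map fun i => T i ω).sort (· ≤ ·) with hl
  have hls : l.Pairwise (· ≤ ·) := Multiset.pairwise_sort _ _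
  have hnd : l.Nodup := by
    rw [← Multiset.coe_nodup, Multiset.sort_eq]
    exact Multiset.Nodup.map hinj M.nodup
  constructor
  · intro h
    have h2 := sorted_nodup_countP l hls hnd (k-1) hk'
    rw [heq] at h; rw [h, countP_eq_filter_card] at h2
    omega
  · intro h
    rw [heq]
    apply sorted_nodup_get_eq l hls hnd _ hk'
    · rw [countP_eq_filter_card, h]; omega
    · rw [← Multiset.mem_coe, Multiset.sort_eq]
      exact Multiset.mem_map.mpr ⟨j, Finset.mem_val.mpr hj, rfl⟩

lemma sysLifeOn_eq_of (T : Fin n → Ω → ℝ) (φ : Finset (Fin n) → ℝ)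
    (hφ01 : ∀ A, φ A = 0 ∨ φ A = 1)
    (hφmono : ∀ A B : Finset (Fin n), A ⊆ B → φ A ≤ φ B)
    (hφempty : φ ∅ = 0) (hφfull : φ Finset.univ = 1) (ω : Ω) (j : Fin n)
    (h1 : φ (insert j (univ.filter fun i => T j ω < T i ω)) = 1)
    (h0 : φ (univ.filter fun i => T j ω < T i ω) = 0) :
    sysLifeOn T Finset.univ φ ω = T j ω := by
  classical
  set B := univ.filter fun i => T j ω < T i ω with hB
  have hPne : ((univ : Finset (Fin n)).powerset.filter fun A => φ A = 1).Nonempty :=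
    ⟨univ, by simp [hφfull]⟩
  have hA_ne : ∀ A ∈ (univ : Finset (Fin n)).powerset.filter fun A => φ A = 1,
      A.Nonempty := by
    intro A hA
    rcases A.eq_empty_or_nonempty with rfl | h
    · exfalso
      have := (Finset.mem_filter.mp hA).2
      rw [hφempty] at this; norm_num at this
    · exact h
  rw [sysLifeOn, dif_pos hPne]
  apply le_antisymm
  · apply Finset.sup'_le
    intro A hA
    rw [dif_pos (hA_ne A hA)]
    by_contra hlt
    push_neg at hlt
    have hsub : A ⊆ B := by
      intro i hi
      rw [hB, Finset.mem_filter]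
      exact ⟨Finset.mem_univ i, lt_of_lt_of_le hlt (Finset.inf'_le _ hi)⟩
    have hm := hφmono A B hsub
    rw [(Finset.mem_filter.mp hA).2, h0] at hm
    norm_num at hm
  · have hmem : insert j B ∈ (univ : Finset (Fin n)).powerset.filter fun A => φ A = 1 :=
      Finset.mem_filter.mpr ⟨Finset.mem_powerset.mpr (Finset.subset_univ _), h1⟩
    refine le_trans ?_ (Finset.le_sup' _ hmem)
    rw [dif_pos (hA_ne _ hmem)]
    apply Finset.le_inf'
    intro i hi
    rcases Finset.mem_insert.mp hi with rfl | hiB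
    · exact le_refl _
    · exact le_of_lt (Finset.mem_filter.mp hiB).2

lemma sysLifeOn_eq_imp (T : Fin n → Ω → ℝ) (φ : Finset (Fin n) → ℝ)
    (hφ01 : ∀ A, φ A = 0 ∨ φ A = 1)
    (hφmono : ∀ A B : Finset (Fin n), A ⊆ B → φ A ≤ φ B)
    (hφempty : φ ∅ = 0) (hφfull : φ Finset.univ = 1) (ω : Ω)
    (hinj : Function.Injective fun i => T i ω) (j : Fin n)
    (h : sysLifeOn T Finset.univ φ ω = T j ω) :
    φ (insert j (univ.filter fun i => T j ω < T i ω)) = 1 ∧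
      φ (univ.filter fun i => T j ω < T i ω) = 0 := by
  classical
  set B := univ.filter fun i => T j ω < T i ω with hB
  have hPne : ((univ : Finset (Fin n)).powerset.filter fun A => φ A = 1).Nonempty :=
    ⟨univ, by simp [hφfull]⟩
  have hA_ne : ∀ A ∈ (univ : Finset (Fin n)).powerset.filter fun A => φ A = 1,
      A.Nonempty := by
    intro A hA
    rcases A.eq_empty_or_nonempty with rfl | h
    · exfalso
      have := (Finset.mem_filter.mp hA).2
      rw [hφempty] at this; norm_num at this
    · exact h
  rw [sysLifeOn, dif_pos hPne] at h
  obtain ⟨A1, hA1P, hA1⟩ := Finset.exists_mem_eq_sup' hPne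
    (fun A => if hA : A.Nonempty then A.inf' hA fun i => T i ω else 0)
  rw [hA1, dif_pos (hA_ne _ hA1P)] at h
  obtain ⟨i0, hi0, hinf⟩ := Finset.exists_mem_eq_inf' (hA_ne _ hA1P) (fun i => T i ω)
  have hij : i0 = j := hinj (show T i0 ω = T j ω by rw [← hinf, h])
  have hjA1 : j ∈ A1 := hij ▸ hi0
  constructor
  · have hsub : A1 ⊆ insert j B := by
      intro i hi
      have hle : T j ω ≤ T i ω := by
        rw [← h]; exact Finset.inf'_le _ hi
      rcases lt_or_eq_of_le hle with hlt | heq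
      · exact Finset.mem_insert.mpr (Or.inr (Finset.mem_filter.mpr ⟨Finset.mem_univ _, hlt⟩))
      · exact Finset.mem_insert.mpr (Or.inl (hinj heq.symm))
    have hm := hφmono A1 (insert j B) hsub
    rw [(Finset.mem_filter.mp hA1P).2] at hm
    rcases hφ01 (insert j B) with h2 | h2
    · rw [h2] at hm; norm_num at hm
    · exact h2
  · rcases hφ01 B with h2 | h2
    · exact h2
    exfalso
    have hBP : B ∈ (univ : Finset (Fin n)).powerset.filter fun A => φ A = 1 :=
      Finset.mem_filter.mpr ⟨Finset.mem_powerset.mpr (Finset.subset_univ _), h2⟩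
    have hBne := hA_ne _ hBP
    obtain ⟨i1, hi1, hinf1⟩ := Finset.exists_mem_eq_inf' hBne (fun i => T i ω)
    have hgt : T j ω < B.inf' hBne fun i => T i ω := by
      rw [hinf1]; exact (Finset.mem_filter.mp hi1).2
    have hle : (B.inf' hBne fun i => T i ω) ≤ T j ω := by
      have h5 : (B.inf' hBne fun i => T i ω) ≤
          (filter (fun A => φ A = 1) univ.powerset).sup' hPne
            (fun A => if hA : A.Nonempty then A.inf' hA fun i => T i ω else 0) := by
        refine le_trans (le_of_eq ?_) (Finset.le_sup' _ hBP)
        simp only [dif_pos hBne]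
      rw [hA1, dif_pos (hA_ne _ hA1P), h] at h5
      exact h5
    exact absurd (lt_of_lt_of_le hgt hle) (lt_irrefl _)

end AuxStmt3

theorem stmt_3 {Ω : Type*} [MeasurableSpace Ω] (μ : Measure Ω) [IsProbabilityMeasure μ]
    {n : ℕ} (T : Fin n → Ω → ℝ) (hTmeas : ∀ i, Measurable (T i))
    (hTnonneg : ∀ i ω, 0 ≤ T i ω)
    (hties : ∀ i j : Fin n, i ≠ j → μ {ω | T i ω = T j ω} = 0)
    (φ : Finset (Fin n) → ℝ)
    (hφ01 : ∀ A, φ A = 0 ∨ φ A = 1)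
    (hφmono : ∀ A B : Finset (Fin n), A ⊆ B → φ A ≤ φ B)
    (hφempty : φ ∅ = 0) (hφfull : φ Finset.univ = 1)
    (M : Finset (Fin n)) (hM : M.Nonempty) (k : ℕ) (hk1 : 1 ≤ k) (hkm : k ≤ M.card) :
    (μ {ω | sysLifeOn T Finset.univ φ ω = orderStat T M k ω}).toReal =
      ∑ j ∈ M, ∑ A ∈ (Finset.univ : Finset (Fin n)).powerset.filter
          (fun A => ((M \ A) ∪ {j}).card = k),
        (-1 : ℝ) ^ (({j} \ A : Finset (Fin n)).card) * relQual μ T j (A \ {j}) * φ A := by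
  classical
  set G : Set Ω := {ω | ∀ i i' : Fin n, i ≠ i' → T i ω ≠ T i' ω} with hG
  have hGc : μ Gᶜ = 0 := by
    have hsub : Gᶜ ⊆ ⋃ (i : Fin n), ⋃ (i' : Fin n),
        (if i = i' then (∅ : Set Ω) else {ω | T i ω = T i' ω}) := by
      intro ω hω
      simp only [hG, Set.mem_compl_iff, Set.mem_setOf_eq, not_forall] at hω
      obtain ⟨i, i', hne, heq⟩ := hω
      refine Set.mem_iUnion.mpr ⟨i, Set.mem_iUnion.mpr ⟨i', ?_⟩⟩
      rw [if_neg hne]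
      exact not_not.mp heq
    refine measure_mono_null hsub ?_
    refine measure_iUnion_null fun i => measure_iUnion_null fun i' => ?_
    by_cases h : i = i'
    · simp [h]
    · rw [if_neg h]; exact hties i i' h
  have hGmeas : MeasurableSet G := by
    have hGe : G = ⋂ (i : Fin n), ⋂ (i' : Fin n), ⋂ (_ : i ≠ i'), {ω | T i ω = T i' ω}ᶜ := by
      ext ω
      simp only [hG, Set.mem_setOf_eq, Set.mem_iInter, Set.mem_compl_iff]
    rw [hGe]
    exact MeasurableSet.iInter fun i => MeasurableSet.iInter fun i' =>
      MeasurableSet.iInter fun _ => (measurableSet_eq_fun (hTmeas i) (hTmeas i')).compl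
  have hinter : ∀ s : Set Ω, μ (s ∩ G) = μ s := by
    intro s
    refine le_antisymm (measure_mono Set.inter_subset_left) ?_
    calc μ s ≤ μ ((s ∩ G) ∪ Gᶜ) := measure_mono (fun ω hω => by
            by_cases h : ω ∈ G
            · exact Or.inl ⟨hω, h⟩
            · exact Or.inr h)
      _ ≤ μ (s ∩ G) + μ Gᶜ := measure_union_le _ _
      _ = μ (s ∩ G) := by rw [hGc, add_zero]
  set Tset : Fin n → Finset (Finset (Fin n)) := fun j =>
    Finset.univ.filter (fun B => j ∉ B ∧ (M \ B).card = k ∧ φ (insert j B) = 1 ∧ φ B = 0)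
    with hTset
  set S : Finset ((_ : Fin n) × Finset (Fin n)) := M.sigma Tset with hS
  set Ev : ((_ : Fin n) × Finset (Fin n)) → Set Ω := fun p =>
    {ω | (∀ i ∉ p.2, T i ω ≤ T p.1 ω) ∧ ∀ i ∈ p.2, T p.1 ω < T i ω} with hEv
  have hEvMeas : ∀ p, MeasurableSet (Ev p) := by
    intro p
    have hEe : Ev p = (⋂ (i : Fin n), ⋂ (_ : i ∉ p.2), {ω | T i ω ≤ T p.1 ω}) ∩
        ⋂ (i : Fin n), ⋂ (_ : i ∈ p.2), {ω | T p.1 ω < T i ω} := by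
      ext ω
      simp only [hEv, Set.mem_setOf_eq, Set.mem_inter_iff, Set.mem_iInter]
    rw [hEe]
    exact (MeasurableSet.iInter fun i => MeasurableSet.iInter fun _ =>
        measurableSet_le (hTmeas i) (hTmeas p.1)).inter
      (MeasurableSet.iInter fun i => MeasurableSet.iInter fun _ =>
        measurableSet_lt (hTmeas p.1) (hTmeas i))
  have hBdet : ∀ ω ∈ G, ∀ p : (_ : Fin n) × Finset (Fin n), ω ∈ Ev p →
      p.2 = univ.filter (fun i => T p.1 ω < T i ω) := by
    intro ω hω p hp
    ext i
    simp only [Finset.mem_filter, Finset.mem_univ, true_and]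
    constructor
    · exact fun hi => hp.2 i hi
    · intro hlt
      by_contra hiB
      exact absurd hlt (not_lt.mpr (hp.1 i hiB))
  have hsd : ∀ (ω : Ω) (j : Fin n), M \ (univ.filter fun i => T j ω < T i ω)
      = M.filter (fun i => T i ω ≤ T j ω) := by
    intro ω j; ext i
    simp [Finset.mem_sdiff, Finset.mem_filter, not_lt]
  have hinjG : ∀ ω ∈ G, Function.Injective fun i => T i ω := by
    intro ω hω i i' h
    by_contra hne
    exact hω i i' hne h
  -- rank uniqueness
  have hrank : ∀ ω ∈ G, ∀ a ∈ M, ∀ b ∈ M,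
      (M.filter fun i => T i ω ≤ T a ω).card = k →
      (M.filter fun i => T i ω ≤ T b ω).card = k → a = b := by
    intro ω hω a ha b hb hca hcb
    by_contra hne
    have key : ∀ x y : Fin n, y ∈ M → T x ω < T y ω →
        (M.filter fun i => T i ω ≤ T x ω).card < (M.filter fun i => T i ω ≤ T y ω).card := by
      intro x y hy hlt
      apply Finset.card_lt_card
      have hsub : (M.filter fun i => T i ω ≤ T x ω) ⊆ M.filter fun i => T i ω ≤ T y ω := by
        intro i hi
        rw [Finset.mem_filter] at hi ⊢
        exact ⟨hi.1, le_trans hi.2 (le_of_lt hlt)⟩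
      refine (Finset.ssubset_iff_of_subset hsub).mpr ⟨y, Finset.mem_filter.mpr ⟨hy, le_refl _⟩, ?_⟩
      rw [Finset.mem_filter]
      push_neg
      exact fun _ => hlt
    rcases lt_or_gt_of_ne (hω a b hne) with h | h
    · have := key a b hb h; omega
    · have := key b a ha h; omega
  -- pointwise characterization
  have hkey : ∀ ω ∈ G,
      (sysLifeOn T Finset.univ φ ω = orderStat T M k ω ↔ ∃ p ∈ S, ω ∈ Ev p) := by
    intro ω hωG
    have hinj := hinjG ω hωG
    constructor
    · intro heq
      obtain ⟨j1, hj1M, hord⟩ := orderStat_mem T M ω hk1 hkm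
      have hsys : sysLifeOn T Finset.univ φ ω = T j1 ω := by rw [heq, hord]
      obtain ⟨h1, h0⟩ := sysLifeOn_eq_imp T φ hφ01 hφmono hφempty hφfull ω hinj j1 hsys
      refine ⟨⟨j1, univ.filter fun i => T j1 ω < T i ω⟩, ?_, ?_, ?_⟩
      · rw [hS]
        refine Finset.mem_sigma.mpr ⟨hj1M, ?_⟩
        rw [hTset]
        refine Finset.mem_filter.mpr ⟨Finset.mem_univ _, ?_, ?_, h1, h0⟩
        · simp
        · rw [hsd ω j1]
          exact (orderStat_eq_iff T M ω hinj hj1M hk1 hkm).mp hord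
      · intro i hi
        have : ¬ (T j1 ω < T i ω) := by simpa using hi
        exact not_lt.mp this
      · intro i hi
        exact (Finset.mem_filter.mp hi).2
    · rintro ⟨⟨j1, B⟩, hpS, hpE⟩
      have hj1M : j1 ∈ M := (Finset.mem_sigma.mp hpS).1
      have hmem := (Finset.mem_sigma.mp hpS).2
      rw [hTset] at hmem
      obtain ⟨-, hjB, hcard, h1, h0⟩ := Finset.mem_filter.mp hmem
      have hBeq : B = univ.filter fun i => T j1 ω < T i ω := hBdet ω hωG ⟨j1, B⟩ hpE
      subst hBeq
      have hsys := sysLifeOn_eq_of T φ hφ01 hφmono hφempty hφfull ω j1 h1 h0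
      have hord : orderStat T M k ω = T j1 ω :=
        (orderStat_eq_iff T M ω hinj hj1M hk1 hkm).mpr (by rw [← hsd ω j1]; exact hcard)
      rw [hsys, hord]
  -- disjointness
  have hdisj : (↑S : Set ((_ : Fin n) × Finset (Fin n))).PairwiseDisjoint
      (fun p => Ev p ∩ G) := by
    rintro ⟨p1, p2⟩ hp ⟨q1, q2⟩ hq hne
    refine Set.disjoint_left.mpr ?_
    rintro ω ⟨hωp, hωG⟩ ⟨hωq, -⟩
    apply hne
    rw [Finset.mem_coe, hS] at hp hq
    have hp1 : p1 ∈ M := (Finset.mem_sigma.mp hp).1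
    have hq1 : q1 ∈ M := (Finset.mem_sigma.mp hq).1
    have hp2 := (Finset.mem_sigma.mp hp).2
    have hq2 := (Finset.mem_sigma.mp hq).2
    rw [hTset] at hp2 hq2
    obtain ⟨-, -, hpc, -, -⟩ := Finset.mem_filter.mp hp2
    obtain ⟨-, -, hqc, -, -⟩ := Finset.mem_filter.mp hq2
    have hBp := hBdet ω hωG ⟨p1, p2⟩ hωp
    have hBq := hBdet ω hωG ⟨q1, q2⟩ hωq
    simp only at hBp hBq
    rw [hBp, hsd ω p1] at hpc
    rw [hBq, hsd ω q1] at hqc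
    have h11 : p1 = q1 := hrank ω hωG p1 hp1 q1 hq1 hpc hqc
    subst h11
    have h22 : p2 = q2 := by rw [hBp, hBq]
    rw [h22]
  -- measure computation
  have hset : {ω | sysLifeOn T Finset.univ φ ω = orderStat T M k ω} ∩ G
      = ⋃ p ∈ S, (Ev p ∩ G) := by
    ext ω
    simp only [Set.mem_inter_iff, Set.mem_setOf_eq, Set.mem_iUnion, exists_prop]
    constructor
    · rintro ⟨heq, hωG⟩
      obtain ⟨p, hpS, hpE⟩ := (hkey ω hωG).mp heq
      exact ⟨p, hpS, hpE, hωG⟩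
    · rintro ⟨p, hpS, hpE, hωG⟩
      exact ⟨(hkey ω hωG).mpr ⟨p, hpS, hpE⟩, hωG⟩
  have hμ : μ {ω | sysLifeOn T Finset.univ φ ω = orderStat T M k ω}
      = ∑ p ∈ S, μ (Ev p) := by
    rw [← hinter {ω | sysLifeOn T Finset.univ φ ω = orderStat T M k ω}, hset,
      measure_biUnion_finset hdisj (fun p _ => (hEvMeas p).inter hGmeas)]
    exact Finset.sum_congr rfl fun p _ => hinter (Ev p)
  rw [hμ, ENNReal.toReal_sum (fun p _ => measure_ne_top μ _)]
  have hterm : ∀ p ∈ S, (μ (Ev p)).toReal = relQual μ T p.1 p.2 := by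
    intro p _
    rfl
  rw [Finset.sum_congr rfl hterm, hS, Finset.sum_sigma]
  -- combinatorial part
  refine Finset.sum_congr rfl ?_
  intro j hjM
  -- inner identity
  have hkeyset1 : ∀ A : Finset (Fin n), j ∈ A → M \ A.erase j = (M \ A) ∪ {j} := by
    intro A hjA
    ext i
    by_cases hij : i = j
    · subst hij
      simp [hjM, Finset.mem_erase]
    · simp [Finset.mem_sdiff, Finset.mem_erase, Finset.mem_union, Finset.mem_singleton, hij]
  have hkeyset2 : ∀ B : Finset (Fin n), j ∉ B → (M \ insert j B) ∪ {j} = M \ B := by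
    intro B hjB
    ext i
    by_cases hij : i = j
    · subst hij
      simp [hjM, hjB]
    · simp [Finset.mem_sdiff, Finset.mem_insert, Finset.mem_union, Finset.mem_singleton, hij]
  rw [Finset.powerset_univ]
  rw [← Finset.sum_filter_add_sum_filter_not (univ.filter fun A => ((M \ A) ∪ {j}).card = k)
    (fun A => j ∈ A)]
  have part1 : ∑ A ∈ (univ.filter fun A => ((M \ A) ∪ {j}).card = k).filter (fun A => j ∈ A),
      (-1 : ℝ) ^ (({j} \ A : Finset (Fin n)).card) * relQual μ T j (A \ {j}) * φ A
      = ∑ B ∈ univ.filter (fun B => j ∉ B ∧ (M \ B).card = k),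
        relQual μ T j B * φ (insert j B) := by
    refine Finset.sum_bij' (fun A _ => A.erase j) (fun B _ => insert j B) ?_ ?_ ?_ ?_ ?_
    · intro A hA
      rw [Finset.mem_filter, Finset.mem_filter] at hA
      obtain ⟨⟨-, hc⟩, hjA⟩ := hA
      rw [Finset.mem_filter]
      refine ⟨Finset.mem_univ _, Finset.notMem_erase _ _, ?_⟩
      rw [hkeyset1 A hjA]
      exact hc
    · intro B hB
      rw [Finset.mem_filter] at hB
      obtain ⟨-, hjB, hc⟩ := hB
      rw [Finset.mem_filter, Finset.mem_filter]
      refine ⟨⟨Finset.mem_univ _, ?_⟩, Finset.mem_insert_self _ _⟩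
      rw [hkeyset2 B hjB]
      exact hc
    · intro A hA
      rw [Finset.mem_filter] at hA
      exact Finset.insert_erase hA.2
    · intro B hB
      rw [Finset.mem_filter] at hB
      exact Finset.erase_insert hB.2.1
    · intro A hA
      rw [Finset.mem_filter] at hA
      have hjA := hA.2
      have he : ({j} : Finset (Fin n)) \ A = ∅ :=
        Finset.sdiff_eq_empty_iff_subset.mpr (Finset.singleton_subset_iff.mpr hjA)
      rw [he, Finset.sdiff_singleton_eq_erase, Finset.insert_erase hjA]
      simp
  have part2 : ∑ A ∈ (univ.filter fun A => ((M \ A) ∪ {j}).card = k).filter (fun A => ¬ j ∈ A),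
      (-1 : ℝ) ^ (({j} \ A : Finset (Fin n)).card) * relQual μ T j (A \ {j}) * φ A
      = ∑ B ∈ univ.filter (fun B => j ∉ B ∧ (M \ B).card = k),
        -(relQual μ T j B * φ B) := by
    have hfe : (univ.filter fun A => ((M \ A) ∪ {j}).card = k).filter (fun A => ¬ j ∈ A)
        = univ.filter (fun B => j ∉ B ∧ (M \ B).card = k) := by
      rw [Finset.filter_filter]
      refine Finset.filter_congr ?_
      intro A _
      have hu : ∀ (h : j ∉ A), (M \ A) ∪ {j} = M \ A := fun h =>
        Finset.union_eq_left.mpr (Finset.singleton_subset_iff.mpr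
          (Finset.mem_sdiff.mpr ⟨hjM, h⟩))
      constructor
      · rintro ⟨hc, hjA⟩
        rw [hu hjA] at hc
        exact ⟨hjA, hc⟩
      · rintro ⟨hjA, hc⟩
        exact ⟨by rw [hu hjA]; exact hc, hjA⟩
    rw [hfe]
    refine Finset.sum_congr rfl ?_
    intro B hB
    rw [Finset.mem_filter] at hB
    obtain ⟨-, hjB, -⟩ := hB
    have he : ({j} : Finset (Fin n)) \ B = {j} :=
      Finset.sdiff_eq_self_iff_disjoint.mpr (Finset.disjoint_singleton_left.mpr hjB)
    rw [he, Finset.sdiff_singleton_eq_erase, Finset.erase_eq_of_notMem hjB,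
      Finset.card_singleton]
    ring
  rw [part1, part2, ← Finset.sum_add_distrib]
  have hcomb : ∀ B ∈ univ.filter (fun B => j ∉ B ∧ (M \ B).card = k),
      relQual μ T j B * φ (insert j B) + -(relQual μ T j B * φ B)
      = if φ (insert j B) = 1 ∧ φ B = 0 then relQual μ T j B else 0 := by
    intro B _
    rcases hφ01 (insert j B) with h1 | h1 <;> rcases hφ01 B with h2 | h2
    · rw [if_neg (by rw [h1]; norm_num), h1, h2]; ring
    · exfalso
      have := hφmono B (insert j B) (Finset.subset_insert j B)
      rw [h1, h2] at this; linarith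
    · rw [if_pos ⟨h1, h2⟩, h1, h2]; ring
    · rw [if_neg (by rw [h2]; norm_num), h1, h2]; ring
  rw [Finset.sum_congr rfl hcomb, ← Finset.sum_filter]
  have hsets : Tset j = (univ.filter (fun B => j ∉ B ∧ (M \ B).card = k)).filter
      (fun B => φ (insert j B) = 1 ∧ φ B = 0) := by
    rw [hTset, Finset.filter_filter]
    exact Finset.filter_congr fun B _ => by tauto
  rw [hsets]
end

section
/- For every nonempty set M ⊆ C and every k ∈ {1,…,m}, p_M^{(k)} = ∑_{A⊆C, |M∩A|=m−k+1} q_M^↓(A)·φ(A) − ∑_{A⊆C, |M∩A|=m−k} q_M^↑(A)·φ(A). -/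
open MeasureTheory Finset

section Aux

variable {n : ℕ}

lemma countP_gt_sorted {l : List ℝ} (hl : l.Pairwise (· < ·)) {p : ℕ} (hp : p < l.length) :
    (l.countP fun x => decide (l[p] < x)) = l.length - p - 1 := by
  have hsplit := List.take_append_drop (p+1) l
  have h1 : (List.take (p+1) l).countP (fun x => decide (l[p] < x)) = 0 := by
    rw [List.countP_eq_zero]
    intro x hx
    obtain ⟨q, hq, rfl⟩ := List.mem_iff_getElem.1 hx
    have hq' : q < p + 1 := lt_of_lt_of_le hq (le_trans (List.length_take_le _ _) le_rfl)
    rw [List.getElem_take]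
    simp only [decide_eq_true_eq, not_lt] at *
    rcases Nat.lt_or_ge q p with h | h
    · exact le_of_lt (List.pairwise_iff_getElem.1 hl q p (lt_trans h hp) hp h)
    · have : q = p := le_antisymm (Nat.lt_succ_iff.1 hq') h
      subst this; simp
  have h2 : (List.drop (p+1) l).countP (fun x => decide (l[p] < x)) = (List.drop (p+1) l).length := by
    rw [List.countP_eq_length]
    intro x hx
    obtain ⟨q, hq, rfl⟩ := List.mem_iff_getElem.1 hx
    rw [List.getElem_drop]
    simp only [decide_eq_true_eq]
    have hql : p + 1 + q < l.length := by
      have := hq; rw [List.length_drop] at this; omega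
    exact List.pairwise_iff_getElem.1 hl p (p+1+q) hp hql (by omega)
  calc (l.countP fun x => decide (l[p] < x))
      = ((List.take (p+1) l ++ List.drop (p+1) l).countP fun x => decide (l[p] < x)) := by rw [hsplit]
    _ = l.length - p - 1 := by
        rw [List.countP_append, h1, h2, List.length_drop]; omega

lemma orderStat_exists {Ω : Type*} (T : Fin n → Ω → ℝ) (ω : Ω) (M : Finset (Fin n))
    (hinj : ∀ i ∈ M, ∀ i' ∈ M, T i ω = T i' ω → i = i') (k : ℕ) (hk1 : 1 ≤ k) (hkm : k ≤ M.card) :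
    ∃ j ∈ M, orderStat T M k ω = T j ω ∧
      (M.filter fun i => T j ω < T i ω).card = M.card - k := by
  set t : Fin n → ℝ := fun i => T i ω with ht
  set s : Multiset ℝ := M.val.map t with hs
  set l : List ℝ := s.sort (· ≤ ·) with hl
  have hls : (↑l : Multiset ℝ) = s := Multiset.sort_eq _ _
  have hlen : l.length = M.card := by
    rw [hl, Multiset.length_sort, hs, Multiset.card_map]; rfl
  have hnodup : l.Nodup := by
    rw [← Multiset.coe_nodup, hls, hs]
    exact Multiset.Nodup.map_on hinj M.nodup
  have hsorted : l.Pairwise (· ≤ ·) := Multiset.pairwise_sort _ _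
  have hlt : l.Pairwise (· < ·) := (hsorted.and hnodup).imp fun h => lt_of_le_of_ne h.1 h.2
  have hp : k - 1 < l.length := by omega
  have hos : orderStat T M k ω = l[k-1] := List.getD_eq_getElem l 0 hp
  have hv : l[k-1] ∈ s := by rw [← hls]; exact_mod_cast List.getElem_mem hp
  obtain ⟨j, hjM, hjv⟩ := Multiset.mem_map.1 hv
  refine ⟨j, hjM, by rw [hos]; exact hjv.symm, ?_⟩
  have hjv' : T j ω = l[k-1] := hjv
  have step1 : (M.filter fun i => T j ω < T i ω).card
      = Multiset.card (Multiset.filter (fun i => l[k-1] < t i) M.val) := by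
    simp only [Finset.card_def, Finset.filter_val, hjv']; rfl
  have step2 : Multiset.card (Multiset.filter (fun i => l[k-1] < t i) M.val)
      = Multiset.countP (fun x => l[k-1] < x) s := (Multiset.countP_map t M.val _).symm
  have step3 : Multiset.countP (fun x => l[k-1] < x) s
      = l.countP (fun x => decide (l[k-1] < x)) := by
    rw [← hls, Multiset.coe_countP]
  rw [step1, step2, step3, countP_gt_sorted hlt hp, hlen]
  omega

lemma count_unique {t : Fin n → ℝ} {M : Finset (Fin n)}
    (hinj : ∀ i ∈ M, ∀ i' ∈ M, t i = t i' → i = i') {j j' : Fin n}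
    (hj : j ∈ M) (hj' : j' ∈ M)
    (h : (M.filter fun i => t j < t i).card = (M.filter fun i => t j' < t i).card) :
    j = j' := by
  by_contra hne
  have key : ∀ a b : Fin n, a ∈ M → b ∈ M → t a < t b →
      (M.filter fun i => t b < t i).card < (M.filter fun i => t a < t i).card := by
    intro a b ha hb hab
    apply Finset.card_lt_card
    constructor
    · intro i hi
      simp only [Finset.mem_filter] at *
      exact ⟨hi.1, lt_trans hab hi.2⟩
    · intro hsub
      have : b ∈ M.filter fun i => t a < t i := by
        simp only [Finset.mem_filter]; exact ⟨hb, hab⟩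
      have := hsub this
      simp only [Finset.mem_filter] at this
      exact lt_irrefl _ this.2
  rcases lt_trichotomy (t j) (t j') with hlt | heq | hgt
  · exact (ne_of_gt (key j j' hj hj' hlt)) h
  · exact hne (hinj j hj j' hj' heq)
  · exact (ne_of_lt (key j' j hj' hj hgt)) h

noncomputable def upSet (t : Fin n → ℝ) (j : Fin n) : Finset (Fin n) :=
  Finset.univ.filter fun i => t j < t i

lemma upSet_char {t : Fin n → ℝ} {j : Fin n} {B : Finset (Fin n)} :
    ((∀ i ∉ B, t i ≤ t j) ∧ (∀ i ∈ B, t j < t i)) ↔ B = upSet t j := by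
  constructor
  · rintro ⟨h1, h2⟩
    ext i
    simp only [upSet, Finset.mem_filter, Finset.mem_univ, true_and]
    constructor
    · exact h2 i
    · intro hlt
      by_contra hiB
      exact absurd (h1 i hiB) (not_le.2 hlt)
  · rintro rfl
    constructor
    · intro i hi
      simp only [upSet, Finset.mem_filter, Finset.mem_univ, true_and] at hi
      exact not_lt.1 hi
    · intro i hi
      simp only [upSet, Finset.mem_filter, Finset.mem_univ, true_and] at hi
      exact hi

lemma switch_unique {t : Fin n → ℝ} (hinj : Function.Injective t)
    {φ : Finset (Fin n) → ℝ} (hφmono : ∀ A B : Finset (Fin n), A ⊆ B → φ A ≤ φ B)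
    {j j' : Fin n}
    (hj : φ (upSet t j) = 0 ∧ φ (insert j (upSet t j)) = 1)
    (hj' : φ (upSet t j') = 0 ∧ φ (insert j' (upSet t j')) = 1) :
    j = j' := by
  by_contra hne
  have key : ∀ a b : Fin n, t a < t b →
      insert b (upSet t b) ⊆ upSet t a := by
    intro a b hab i hi
    simp only [upSet, Finset.mem_insert, Finset.mem_filter, Finset.mem_univ, true_and] at *
    rcases hi with rfl | hi
    · exact hab
    · exact lt_trans hab hi
  rcases lt_trichotomy (t j) (t j') with hlt | heq | hgt
  · have := hφmono _ _ (key j j' hlt)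
    rw [hj'.2, hj.1] at this; linarith
  · exact hne (hinj heq)
  · have := hφmono _ _ (key j' j hgt)
    rw [hj.2, hj'.1] at this; linarith

lemma switch_exists {t : Fin n → ℝ} (hinj : Function.Injective t) (j₀ : Fin n)
    {φ : Finset (Fin n) → ℝ} (hφ01 : ∀ A, φ A = 0 ∨ φ A = 1)
    (hφmono : ∀ A B : Finset (Fin n), A ⊆ B → φ A ≤ φ B)
    (hφempty : φ ∅ = 0) (hφfull : φ Finset.univ = 1) :
    ∃ j, φ (upSet t j) = 0 ∧ φ (insert j (upSet t j)) = 1 := by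
  classical
  set D : Finset (Fin n) := Finset.univ.filter fun j => φ (insert j (upSet t j)) = 1 with hD
  have hDne : D.Nonempty := by
    obtain ⟨a, _, ha⟩ := Finset.exists_min_image Finset.univ t ⟨j₀, Finset.mem_univ j₀⟩
    refine ⟨a, ?_⟩
    simp only [hD, Finset.mem_filter, Finset.mem_univ, true_and]
    have : insert a (upSet t a) = Finset.univ := by
      ext i
      simp only [upSet, Finset.mem_insert, Finset.mem_filter, Finset.mem_univ, true_and,
        iff_true]
      rcases eq_or_ne i a with rfl | hne
      · exact Or.inl rfl
      · exact Or.inr (lt_of_le_of_ne (ha i (Finset.mem_univ i)) (fun h => hne (hinj h.symm)))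
    rw [this, hφfull]
  obtain ⟨j, hjD, hjmax⟩ := Finset.exists_max_image D t hDne
  simp only [hD, Finset.mem_filter, Finset.mem_univ, true_and] at hjD
  refine ⟨j, ?_, hjD⟩
  rcases hφ01 (upSet t j) with h0 | h1
  · exact h0
  exfalso
  have hne : (upSet t j).Nonempty := by
    rcases Finset.eq_empty_or_nonempty (upSet t j) with he | hne
    · rw [he, hφempty] at h1; linarith
    · exact hne
  obtain ⟨b, hbU, hb⟩ := Finset.exists_min_image (upSet t j) t hne
  have hbU' : t j < t b := by
    simpa only [upSet, Finset.mem_filter, Finset.mem_univ, true_and] using hbU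
  have hsub : upSet t j ⊆ insert b (upSet t b) := by
    intro i hi
    simp only [upSet, Finset.mem_insert, Finset.mem_filter, Finset.mem_univ, true_and] at *
    rcases eq_or_ne i b with rfl | hne'
    · exact Or.inl rfl
    · exact Or.inr (lt_of_le_of_ne (hb i (by simpa only [upSet, Finset.mem_filter,
        Finset.mem_univ, true_and] using hi)) (fun h => hne' (hinj h.symm)))
  have h1' : φ (insert b (upSet t b)) = 1 := by
    rcases hφ01 (insert b (upSet t b)) with h | h
    · have := hφmono _ _ hsub; rw [h1, h] at this; linarith
    · exact h
  have hbD : b ∈ D := by simp only [hD, Finset.mem_filter, Finset.mem_univ, true_and]; exact h1'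
  exact absurd (hjmax b hbD) (not_le.2 hbU')

lemma sysLife_eq {Ω : Type*} (T : Fin n → Ω → ℝ) (ω : Ω)
    {φ : Finset (Fin n) → ℝ}
    (hφmono : ∀ A B : Finset (Fin n), A ⊆ B → φ A ≤ φ B)
    (hφempty : φ ∅ = 0) (hφfull : φ Finset.univ = 1)
    {j : Fin n} (hj0 : φ (upSet (fun i => T i ω) j) = 0)
    (hj1 : φ (insert j (upSet (fun i => T i ω) j)) = 1) :
    sysLifeOn T Finset.univ φ ω = T j ω := by
  classical
  set t : Fin n → ℝ := fun i => T i ω with ht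
  set F := (Finset.univ : Finset (Fin n)).powerset.filter fun A => φ A = 1 with hF
  have hFne : F.Nonempty := ⟨Finset.univ, by
    simp only [hF, Finset.mem_filter, Finset.mem_powerset, Finset.Subset.refl, true_and]
    exact hφfull⟩
  have hAne : ∀ A ∈ F, A.Nonempty := by
    intro A hA
    simp only [hF, Finset.mem_filter] at hA
    rcases Finset.eq_empty_or_nonempty A with rfl | h
    · rw [hφempty] at hA; exact absurd hA.2 (by norm_num)
    · exact h
  rw [sysLifeOn, dif_pos hFne]
  apply le_antisymm
  · apply Finset.sup'_le
    intro A hA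
    have hne := hAne A hA
    rw [dif_pos hne]
    by_contra hcon
    push_neg at hcon
    have hsub : A ⊆ upSet t j := by
      intro i hi
      simp only [upSet, Finset.mem_filter, Finset.mem_univ, true_and]
      exact lt_of_lt_of_le hcon (Finset.inf'_le _ hi)
    have := hφmono _ _ hsub
    rw [hj0] at this
    simp only [hF, Finset.mem_filter] at hA
    rw [hA.2] at this; linarith
  · have hmem : insert j (upSet t j) ∈ F := by
      simp only [hF, Finset.mem_filter, Finset.mem_powerset]
      exact ⟨Finset.subset_univ _, hj1⟩
    have hne : (insert j (upSet t j)).Nonempty := ⟨j, Finset.mem_insert_self _ _⟩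
    have hval : (if hA : (insert j (upSet t j)).Nonempty then
        (insert j (upSet t j)).inf' hA (fun i => T i ω) else 0) = T j ω := by
      rw [dif_pos hne]
      apply le_antisymm
      · exact Finset.inf'_le _ (Finset.mem_insert_self _ _)
      · apply Finset.le_inf'
        intro i hi
        rcases Finset.mem_insert.1 hi with rfl | hi
        · exact le_rfl
        · simp only [upSet, Finset.mem_filter, Finset.mem_univ, true_and] at hi
          exact le_of_lt hi
    calc T j ω = _ := hval.symm
    _ ≤ _ := Finset.le_sup' (fun A => if hA : A.Nonempty then A.inf' hA fun i => T i ω else 0) hmem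

end Aux

theorem stmt_4 {Ω : Type*} [MeasurableSpace Ω] (μ : Measure Ω) [IsProbabilityMeasure μ]
    {n : ℕ} (T : Fin n → Ω → ℝ) (hTmeas : ∀ i, Measurable (T i))
    (hTnonneg : ∀ i ω, 0 ≤ T i ω)
    (hties : ∀ i j : Fin n, i ≠ j → μ {ω | T i ω = T j ω} = 0)
    (φ : Finset (Fin n) → ℝ)
    (hφ01 : ∀ A, φ A = 0 ∨ φ A = 1)
    (hφmono : ∀ A B : Finset (Fin n), A ⊆ B → φ A ≤ φ B)
    (hφempty : φ ∅ = 0) (hφfull : φ Finset.univ = 1)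
    (M : Finset (Fin n)) (hM : M.Nonempty) (k : ℕ) (hk1 : 1 ≤ k) (hkm : k ≤ M.card) :
    (μ {ω | sysLifeOn T Finset.univ φ ω = orderStat T M k ω}).toReal =
      (∑ A ∈ (Finset.univ : Finset (Fin n)).powerset.filter
          (fun A => (M ∩ A).card = M.card - k + 1),
        (∑ j ∈ M ∩ A, relQual μ T j (A \ {j})) * φ A)
      -
      (∑ A ∈ (Finset.univ : Finset (Fin n)).powerset.filter
          (fun A => (M ∩ A).card = M.card - k),
        (∑ j ∈ M \ A, relQual μ T j A) * φ A) := by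
  classical
  set Ev : Fin n × Finset (Fin n) → Set Ω := fun p =>
    {ω | (∀ i ∉ p.2, T i ω ≤ T p.1 ω) ∧ ∀ i ∈ p.2, T p.1 ω < T i ω} with hEv
  have hEvMeas : ∀ p, MeasurableSet (Ev p) := by
    intro p
    have : Ev p = (⋂ i ∈ (Finset.univ.filter (· ∉ p.2) : Finset (Fin n)),
        {ω | T i ω ≤ T p.1 ω}) ∩ ⋂ i ∈ p.2, {ω | T p.1 ω < T i ω} := by
      ext ω
      simp only [hEv, Set.mem_setOf_eq, Set.mem_inter_iff, Set.mem_iInter,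
        Finset.mem_filter, Finset.mem_univ, true_and]
    rw [this]
    exact (MeasurableSet.biInter (Set.to_countable _)
        (fun i _ => measurableSet_le (hTmeas i) (hTmeas p.1))).inter
      (MeasurableSet.biInter (Set.to_countable _)
        (fun i _ => measurableSet_lt (hTmeas p.1) (hTmeas i)))
  set G : Set Ω := {ω | Function.Injective fun i => T i ω} with hG
  have hGm : MeasurableSet G := by
    have : G = ⋂ i, ⋂ i', {ω | T i ω = T i' ω → i = i'} := by
      ext ω
      simp only [hG, Set.mem_setOf_eq, Set.mem_iInter, Function.Injective]
    rw [this]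
    refine MeasurableSet.iInter fun i => MeasurableSet.iInter fun i' => ?_
    by_cases h : i = i'
    · subst h
      have : {ω : Ω | T i ω = T i ω → i = i} = Set.univ := by
        ext ω; simp
      rw [this]; exact MeasurableSet.univ
    · have : {ω : Ω | T i ω = T i' ω → i = i'} = {ω | T i ω = T i' ω}ᶜ := by
        ext ω; simp only [Set.mem_setOf_eq, Set.mem_compl_iff]
        exact ⟨fun hh hh' => h (hh hh'), fun hh hh' => absurd hh' hh⟩
      rw [this]
      exact (measurableSet_eq_fun (hTmeas i) (hTmeas i')).compl
  have hGc : μ Gᶜ = 0 := by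
    have hsub : Gᶜ ⊆ ⋃ i, ⋃ i', ⋃ (_ : i ≠ i'), {ω | T i ω = T i' ω} := by
      intro ω hω
      simp only [hG, Set.mem_compl_iff, Set.mem_setOf_eq, Function.Injective] at hω
      push_neg at hω
      obtain ⟨i, i', h, hne⟩ := hω
      simp only [Set.mem_iUnion]
      exact ⟨i, i', hne, h⟩
    refine measure_mono_null hsub ?_
    refine measure_iUnion_null fun i => measure_iUnion_null fun i' => measure_iUnion_null fun h => hties i i' h
  set S : Finset (Fin n × Finset (Fin n)) := Finset.univ.filter (fun p =>
    p.1 ∈ M ∧ p.1 ∉ p.2 ∧ (M ∩ p.2).card = M.card - k ∧ φ p.2 = 0 ∧ φ (insert p.1 p.2) = 1)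
    with hSdef
  -- pointwise characterization
  have hmain : ∀ ω ∈ G, (sysLifeOn T Finset.univ φ ω = orderStat T M k ω ↔ ∃ p ∈ S, ω ∈ Ev p) := by
    intro ω hωG
    have hinj : Function.Injective fun i => T i ω := hωG
    have hinjM : ∀ i ∈ M, ∀ i' ∈ M, T i ω = T i' ω → i = i' := fun i _ i' _ h => hinj h
    set t : Fin n → ℝ := fun i => T i ω with htdef
    have hintercard : ∀ j : Fin n, M ∩ upSet t j = M.filter fun i => t j < t i := by
      intro j
      ext i
      simp only [upSet, Finset.mem_inter, Finset.mem_filter, Finset.mem_univ, true_and]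
    constructor
    · intro heq
      obtain ⟨j, hj0, hj1⟩ := switch_exists hinj hM.choose hφ01 hφmono hφempty hφfull
      have hsys : sysLifeOn T Finset.univ φ ω = T j ω :=
        sysLife_eq T ω hφmono hφempty hφfull hj0 hj1
      obtain ⟨j', hj'M, hos, hcard⟩ := orderStat_exists T ω M hinjM k hk1 hkm
      have hjj' : j = j' := hinj (show T j ω = T j' ω by rw [← hsys, heq, hos])
      subst hjj'
      refine ⟨(j, upSet t j), ?_, ?_⟩
      · simp only [hSdef, Finset.mem_filter, Finset.mem_univ, true_and]
        refine ⟨hj'M, ?_, ?_, hj0, hj1⟩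
        · simp only [upSet, Finset.mem_filter, Finset.mem_univ, true_and]
          exact lt_irrefl _
        · rw [hintercard]; exact hcard
      · exact upSet_char.2 rfl
    · rintro ⟨p, hpS, hpE⟩
      simp only [hSdef, Finset.mem_filter, Finset.mem_univ, true_and] at hpS
      obtain ⟨hp1M, _, hpcard, hp0, hp1⟩ := hpS
      have hB : p.2 = upSet t p.1 := upSet_char.1 hpE
      rw [hB] at hp0 hp1 hpcard
      have hsys : sysLifeOn T Finset.univ φ ω = T p.1 ω :=
        sysLife_eq T ω hφmono hφempty hφfull hp0 hp1
      obtain ⟨j', hj'M, hos, hcard⟩ := orderStat_exists T ω M hinjM k hk1 hkm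
      rw [hintercard] at hpcard
      have : p.1 = j' := count_unique hinjM hp1M hj'M (by rw [hpcard, hcard])
      rw [hsys, hos, this]

  -- set splitting
  have hsplit : {ω | sysLifeOn T Finset.univ φ ω = orderStat T M k ω} ∩ G
      = ⋃ p ∈ S, (Ev p ∩ G) := by
    ext ω
    simp only [Set.mem_inter_iff, Set.mem_setOf_eq, Set.mem_iUnion]
    constructor
    · rintro ⟨hev, hωG⟩
      obtain ⟨p, hpS, hpE⟩ := (hmain ω hωG).1 hev
      exact ⟨p, hpS, hpE, hωG⟩
    · rintro ⟨p, hpS, hpE, hωG⟩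
      exact ⟨(hmain ω hωG).2 ⟨p, hpS, hpE⟩, hωG⟩
  have hdisj : (↑S : Set (Fin n × Finset (Fin n))).PairwiseDisjoint fun p => Ev p ∩ G := by
    intro p hp q hq hne
    refine Set.disjoint_left.2 fun ω hωp hωq => hne ?_
    obtain ⟨hpE, hωG⟩ := hωp
    obtain ⟨hqE, _⟩ := hωq
    have hinj : Function.Injective fun i => T i ω := hωG
    have hBp : p.2 = upSet (fun i => T i ω) p.1 := upSet_char.1 hpE
    have hBq : q.2 = upSet (fun i => T i ω) q.1 := upSet_char.1 hqE
    simp only [hSdef, Finset.mem_coe, Finset.mem_filter, Finset.mem_univ, true_and] at hp hq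
    have h1 : p.1 = q.1 := by
      refine switch_unique hinj hφmono ⟨?_, ?_⟩ ⟨?_, ?_⟩
      · rw [← hBp]; exact hp.2.2.2.1
      · rw [← hBp]; exact hp.2.2.2.2
      · rw [← hBq]; exact hq.2.2.2.1
      · rw [← hBq]; exact hq.2.2.2.2
    exact Prod.ext h1 (by rw [hBp, hBq, h1])
  have hmeasure : μ {ω | sysLifeOn T Finset.univ φ ω = orderStat T M k ω}
      = ∑ p ∈ S, μ (Ev p) := by
    rw [← measure_inter_conull hGc, hsplit,
      measure_biUnion_finset hdisj (fun p _ => (hEvMeas p).inter hGm)]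
    exact Finset.sum_congr rfl fun p _ => measure_inter_conull hGc
  have hLHS : (μ {ω | sysLifeOn T Finset.univ φ ω = orderStat T M k ω}).toReal
      = ∑ p ∈ S, relQual μ T p.1 p.2 := by
    rw [hmeasure, ENNReal.toReal_sum (fun p _ => measure_ne_top μ _)]
    rfl
  rw [hLHS]
  -- combinatorics
  set T₀ : Finset (Fin n × Finset (Fin n)) := Finset.univ.filter (fun p =>
    p.1 ∈ M ∧ p.1 ∉ p.2 ∧ (M ∩ p.2).card = M.card - k) with hT₀def
  set T₁ : Finset (Fin n × Finset (Fin n)) := Finset.univ.filter (fun p =>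
    p.1 ∈ M ∧ p.1 ∈ p.2 ∧ (M ∩ p.2).card = M.card - k + 1) with hT₁def
  have hpow : (Finset.univ : Finset (Fin n)).powerset = Finset.univ := Finset.powerset_univ
  -- second sum
  have hclaim2 : (∑ A ∈ (Finset.univ : Finset (Fin n)).powerset.filter
          (fun A => (M ∩ A).card = M.card - k),
        (∑ j ∈ M \ A, relQual μ T j A) * φ A)
      = ∑ p ∈ T₀, relQual μ T p.1 p.2 * φ p.2 := by
    have e1 : (∑ p ∈ T₀, relQual μ T p.1 p.2 * φ p.2)
        = ∑ j : Fin n, ∑ A : Finset (Fin n),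
            (if j ∈ M ∧ j ∉ A ∧ (M ∩ A).card = M.card - k
              then relQual μ T j A * φ A else 0) := by
      rw [hT₀def, Finset.sum_filter, Fintype.sum_prod_type]
    rw [e1, Finset.sum_comm, hpow, Finset.sum_filter]
    refine Finset.sum_congr rfl fun A _ => ?_
    by_cases hc : (M ∩ A).card = M.card - k
    · rw [if_pos hc, Finset.sum_mul,
        show M \ A = Finset.univ.filter (fun j => j ∈ M ∧ j ∉ A) from by
          ext j; simp [Finset.mem_sdiff],
        Finset.sum_filter]
      refine Finset.sum_congr rfl fun j _ => ?_
      by_cases hj : j ∈ M ∧ j ∉ A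
      · rw [if_pos hj, if_pos ⟨hj.1, hj.2, hc⟩]
      · rw [if_neg hj, if_neg fun h => hj ⟨h.1, h.2.1⟩]
    · rw [if_neg hc]
      exact (Finset.sum_eq_zero fun j _ => if_neg fun h => hc h.2.2).symm
  -- first sum
  have hclaim1 : (∑ A ∈ (Finset.univ : Finset (Fin n)).powerset.filter
          (fun A => (M ∩ A).card = M.card - k + 1),
        (∑ j ∈ M ∩ A, relQual μ T j (A \ {j})) * φ A)
      = ∑ p ∈ T₁, relQual μ T p.1 (p.2 \ {p.1}) * φ p.2 := by
    have e1 : (∑ p ∈ T₁, relQual μ T p.1 (p.2 \ {p.1}) * φ p.2)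
        = ∑ j : Fin n, ∑ A : Finset (Fin n),
            (if j ∈ M ∧ j ∈ A ∧ (M ∩ A).card = M.card - k + 1
              then relQual μ T j (A \ {j}) * φ A else 0) := by
      rw [hT₁def, Finset.sum_filter, Fintype.sum_prod_type]
    rw [e1, Finset.sum_comm, hpow, Finset.sum_filter]
    refine Finset.sum_congr rfl fun A _ => ?_
    by_cases hc : (M ∩ A).card = M.card - k + 1
    · have hMA : M ∩ A = Finset.univ.filter (fun j => j ∈ M ∧ j ∈ A) := by
        ext j; simp [Finset.mem_inter]
      rw [if_pos hc, Finset.sum_mul, hMA, Finset.sum_filter]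
      rw [hMA] at hc
      refine Finset.sum_congr rfl fun j _ => ?_
      by_cases hj : j ∈ M ∧ j ∈ A
      · rw [if_pos hj, if_pos ⟨hj.1, hj.2, hc⟩]
      · rw [if_neg hj, if_neg fun h => hj ⟨h.1, h.2.1⟩]
    · rw [if_neg hc]
      exact (Finset.sum_eq_zero fun j _ => if_neg fun h => hc h.2.2).symm
  have hbij : (∑ p ∈ T₁, relQual μ T p.1 (p.2 \ {p.1}) * φ p.2)
      = ∑ p ∈ T₀, relQual μ T p.1 p.2 * φ (insert p.1 p.2) := by
    refine Finset.sum_nbij' (fun p => (p.1, p.2.erase p.1)) (fun p => (p.1, insert p.1 p.2))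
      ?_ ?_ ?_ ?_ ?_
    · intro p hp
      simp only [hT₁def, Finset.mem_filter, Finset.mem_univ, true_and] at hp
      obtain ⟨h1, h2, h3⟩ := hp
      simp only [hT₀def, Finset.mem_filter, Finset.mem_univ, true_and]
      refine ⟨h1, Finset.notMem_erase _ _, ?_⟩
      have hEq : M ∩ p.2.erase p.1 = (M ∩ p.2).erase p.1 := by
        ext i
        simp only [Finset.mem_inter, Finset.mem_erase]
        tauto
      rw [hEq, Finset.card_erase_of_mem (Finset.mem_inter.2 ⟨h1, h2⟩), h3]
      omega
    · intro p hp
      simp only [hT₀def, Finset.mem_filter, Finset.mem_univ, true_and] at hp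
      obtain ⟨h1, h2, h3⟩ := hp
      simp only [hT₁def, Finset.mem_filter, Finset.mem_univ, true_and]
      refine ⟨h1, Finset.mem_insert_self _ _, ?_⟩
      have hEq : M ∩ insert p.1 p.2 = insert p.1 (M ∩ p.2) := by
        ext i
        simp only [Finset.mem_inter, Finset.mem_insert]
        constructor
        · rintro ⟨hiM, rfl | hi⟩
          · exact Or.inl rfl
          · exact Or.inr ⟨hiM, hi⟩
        · rintro (rfl | ⟨hiM, hi⟩)
          · exact ⟨h1, Or.inl rfl⟩
          · exact ⟨hiM, Or.inr hi⟩
      rw [hEq, Finset.card_insert_of_notMem (fun h => h2 (Finset.mem_inter.1 h).2), h3]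
    · intro p hp
      simp only [hT₁def, Finset.mem_filter, Finset.mem_univ, true_and] at hp
      dsimp only
      exact Prod.ext rfl (Finset.insert_erase hp.2.1)
    · intro p hp
      simp only [hT₀def, Finset.mem_filter, Finset.mem_univ, true_and] at hp
      dsimp only
      exact Prod.ext rfl (Finset.erase_insert hp.2.1)
    · intro p hp
      simp only [hT₁def, Finset.mem_filter, Finset.mem_univ, true_and] at hp
      dsimp only
      rw [← Finset.erase_eq, Finset.insert_erase hp.2.1]
  rw [hclaim1, hclaim2, hbij, ← Finset.sum_sub_distrib]
  have hsum : ∀ p ∈ T₀, relQual μ T p.1 p.2 * φ (insert p.1 p.2)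
      - relQual μ T p.1 p.2 * φ p.2
      = if φ p.2 = 0 ∧ φ (insert p.1 p.2) = 1 then relQual μ T p.1 p.2 else 0 := by
    intro p _
    rcases hφ01 p.2 with h0 | h1
    · rcases hφ01 (insert p.1 p.2) with g0 | g1
      · simp [h0, g0]
      · simp [h0, g1]
    · have g1 : φ (insert p.1 p.2) = 1 := by
        rcases hφ01 (insert p.1 p.2) with g0 | g1
        · have := hφmono _ _ (Finset.subset_insert p.1 p.2)
          rw [h1, g0] at this; linarith
        · exact g1
      simp [h1, g1]
  rw [Finset.sum_congr rfl hsum, ← Finset.sum_filter]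
  have hST : S = T₀.filter fun p => φ p.2 = 0 ∧ φ (insert p.1 p.2) = 1 := by
    ext p
    simp only [hSdef, hT₀def, Finset.mem_filter, Finset.mem_univ, true_and]
    tauto
  rw [← hST]
end

section
/- For every component j ∈ C, the Barlow-Proschan index satisfies I_BP^{(j)} = ∑_{A⊆C} d(A)·Pr(T_j = min_{i∈A} T_i). -/
open MeasureTheory Finset

/-- `min_{i ∈ A} T i` (with junk value `0` when `A = ∅`). -/
noncomputable def minLifeOn {Ω : Type*} {n : ℕ} (T : Fin n → Ω → ℝ)
    (A : Finset (Fin n)) (ω : Ω) : ℝ :=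
  if h : A.Nonempty then A.inf' h fun i => T i ω else 0

/-- The signed domination function `d(A) = ∑_{B ⊆ A} (-1)^{|A|-|B|} φ(B)`. -/
noncomputable def signedDom {n : ℕ} (φ : Finset (Fin n) → ℝ) (A : Finset (Fin n)) : ℝ :=
  ∑ B ∈ A.powerset, (-1 : ℝ) ^ (A.card - B.card) * φ B

/-! ### Auxiliary combinatorics -/

lemma sum_signedDom {n : ℕ} (φ : Finset (Fin n) → ℝ) (S : Finset (Fin n)) :
    ∑ A ∈ S.powerset, signedDom φ A = φ S := by
  unfold signedDom
  rw [Finset.sum_comm' (t' := S.powerset)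
      (s' := fun B => S.powerset.filter fun A => B ⊆ A)
      (fun A B => by
        simp only [Finset.mem_powerset, Finset.mem_filter]
        constructor
        · rintro ⟨hA, hB⟩; exact ⟨⟨hA, hB⟩, hB.trans hA⟩
        · rintro ⟨⟨hA, hB⟩, _⟩; exact ⟨hA, hB⟩)]
  have key : ∀ B ∈ S.powerset,
      (∑ A ∈ S.powerset.filter (fun A => B ⊆ A), (-1 : ℝ) ^ (A.card - B.card) * φ B)
        = (if B = S then 1 else 0) * φ B := by
    intro B hB
    rw [Finset.mem_powerset] at hB
    rw [show (S.powerset.filter fun A => B ⊆ A) = (S \ B).powerset.image (fun A' => A' ∪ B) by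
      ext A
      simp only [Finset.mem_filter, Finset.mem_powerset, Finset.mem_image]
      constructor
      · rintro ⟨hAS, hBA⟩
        exact ⟨A \ B, Finset.sdiff_subset_sdiff hAS le_rfl, by
          rw [Finset.sdiff_union_self_eq_union, Finset.union_eq_left.2 hBA]⟩
      · rintro ⟨A', hA', rfl⟩
        exact ⟨Finset.union_subset (hA'.trans (Finset.sdiff_subset)) hB,
          Finset.subset_union_right⟩]
    rw [Finset.sum_image (by
      intro x hx y hy hxy
      rw [Finset.mem_coe, Finset.mem_powerset] at hx hy
      have hx' : Disjoint x B := Finset.disjoint_of_subset_left hx Finset.sdiff_disjoint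
      have hy' : Disjoint y B := Finset.disjoint_of_subset_left hy Finset.sdiff_disjoint
      calc x = (x ∪ B) \ B := by rw [Finset.union_sdiff_right, Finset.sdiff_eq_self_of_disjoint hx']
        _ = (y ∪ B) \ B := by rw [show x ∪ B = y ∪ B from hxy]
        _ = y := by rw [Finset.union_sdiff_right, Finset.sdiff_eq_self_of_disjoint hy'])]
    have hcd : ∀ A' ∈ (S \ B).powerset, ((A' ∪ B).card - B.card) = A'.card := by
      intro A' hA'
      rw [Finset.mem_powerset] at hA'
      have : Disjoint A' B := Finset.disjoint_of_subset_left hA' Finset.sdiff_disjoint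
      rw [Finset.card_union_of_disjoint this]; omega
    rw [Finset.sum_congr rfl fun A' hA' => by rw [hcd A' hA']]
    have hcast := congrArg (Int.cast : ℤ → ℝ) (Finset.sum_powerset_neg_one_pow_card (x := S \ B))
    push_cast at hcast
    rw [← Finset.sum_mul, hcast]
    congr 1
    simp only [Finset.sdiff_eq_empty_iff_subset]
    by_cases h : B = S
    · simp [h]
    · rw [if_neg (fun hs => h (Finset.Subset.antisymm hB hs)), if_neg h]
  rw [Finset.sum_congr rfl key]
  simp [ite_mul, Finset.sum_ite_eq' S.powerset S (fun B => φ B)]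

lemma signedDom_empty {n : ℕ} (φ : Finset (Fin n) → ℝ) (hφ : φ ∅ = 0) :
    signedDom φ ∅ = 0 := by
  simp [signedDom, hφ]

/-! ### The partition events -/

section BPaux

variable {Ω : Type*} [MeasurableSpace Ω] {n : ℕ}

/-- The event `{i ≠ j : T i > T j} = B`. -/
def evB (T : Fin n → Ω → ℝ) (j : Fin n) (B : Finset (Fin n)) : Set Ω :=
  {ω | ∀ i, i ≠ j → (T j ω < T i ω ↔ i ∈ B)}

/-- The null event of some tie. -/
def badN (T : Fin n → Ω → ℝ) : Set Ω :=
  ⋃ (i : Fin n) (k : Fin n) (_ : i ≠ k), {ω | T i ω = T k ω}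

lemma badN_null (μ : Measure Ω) (T : Fin n → Ω → ℝ)
    (hties : ∀ i k : Fin n, i ≠ k → μ {ω | T i ω = T k ω} = 0) : μ (badN T) = 0 := by
  refine measure_iUnion_null fun i => measure_iUnion_null fun k => measure_iUnion_null fun h => ?_
  exact hties i k h

lemma badN_mem {T : Fin n → Ω → ℝ} {ω : Ω} (i k : Fin n) (hik : i ≠ k)
    (h : T i ω = T k ω) : ω ∈ badN T := by
  exact Set.mem_iUnion.2 ⟨i, Set.mem_iUnion.2 ⟨k, Set.mem_iUnion.2 ⟨hik, h⟩⟩⟩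

lemma evB_meas {T : Fin n → Ω → ℝ} (hT : ∀ i, Measurable (T i)) (j : Fin n)
    (B : Finset (Fin n)) : MeasurableSet (evB T j B) := by
  have : evB T j B = ⋂ i, {ω | i ≠ j → (T j ω < T i ω ↔ i ∈ B)} := by
    ext ω; simp [evB, Set.mem_iInter]
  rw [this]
  refine MeasurableSet.iInter fun i => ?_
  by_cases hij : i = j
  · simp [hij]
  · by_cases hiB : i ∈ B
    · have : {ω | i ≠ j → (T j ω < T i ω ↔ i ∈ B)} = {ω | T j ω < T i ω} := by
        ext ω; simp [hij, hiB]
      rw [this]; exact measurableSet_lt (hT j) (hT i)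
    · have : {ω | i ≠ j → (T j ω < T i ω ↔ i ∈ B)} = {ω | T j ω < T i ω}ᶜ := by
        ext ω; simp [hij, hiB]
      rw [this]; exact (measurableSet_lt (hT j) (hT i)).compl

lemma evB_cover (T : Fin n → Ω → ℝ) (j : Fin n) (ω : Ω) :
    ∃ B ∈ (Finset.univ.erase j).powerset, ω ∈ evB T j B := by
  classical
  refine ⟨(Finset.univ.erase j).filter (fun i => T j ω < T i ω), by
    simp [Finset.filter_subset], ?_⟩
  intro i hij
  simp [Finset.mem_filter, Finset.mem_erase, hij]

lemma evB_unique {T : Fin n → Ω → ℝ} {j : Fin n} {B B' : Finset (Fin n)} {ω : Ω}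
    (hB : B ⊆ Finset.univ.erase j) (hB' : B' ⊆ Finset.univ.erase j)
    (h : ω ∈ evB T j B) (h' : ω ∈ evB T j B') : B = B' := by
  ext i
  constructor
  · intro hi
    have hij : i ≠ j := (Finset.mem_erase.1 (hB hi)).1
    exact (h' i hij).1 ((h i hij).2 hi)
  · intro hi
    have hij : i ≠ j := (Finset.mem_erase.1 (hB' hi)).1
    exact (h i hij).1 ((h' i hij).2 hi)

/-- Key partition lemma: if membership in `S` coincides off the tie-event with a
condition `c` depending only on the partition cell, then `μ S` is the sum of the
cell measures over cells satisfying `c`. -/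
lemma meas_eq_partition (μ : Measure Ω) [IsProbabilityMeasure μ]
    {T : Fin n → Ω → ℝ} (hT : ∀ i, Measurable (T i))
    (hties : ∀ i k : Fin n, i ≠ k → μ {ω | T i ω = T k ω} = 0)
    (j : Fin n) (S : Set Ω) (c : Finset (Fin n) → Prop) [DecidablePred c]
    (hc : ∀ B ∈ (Finset.univ.erase j).powerset, ∀ ω ∈ evB T j B, ω ∉ badN T → (ω ∈ S ↔ c B)) :
    (μ S).toReal
      = ∑ B ∈ (Finset.univ.erase j).powerset, if c B then (μ (evB T j B)).toReal else 0 := by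
  classical
  set P := (Finset.univ.erase j).powerset with hP
  set U : Set Ω := ⋃ B ∈ P.filter c, evB T j B with hU
  have hN : μ (badN T) = 0 := badN_null μ T hties
  have hSU : S \ badN T = U \ badN T := by
    ext ω
    simp only [Set.mem_diff]
    constructor
    · rintro ⟨hS, hNω⟩
      obtain ⟨B, hBP, hBω⟩ := evB_cover T j ω
      refine ⟨Set.mem_biUnion (Finset.mem_filter.2 ⟨hBP, (hc B hBP ω hBω hNω).1 hS⟩) hBω, hNω⟩
    · rintro ⟨hUω, hNω⟩
      obtain ⟨B, hBP, hBω⟩ := Set.mem_iUnion₂.1 hUω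
      have hBP' := Finset.mem_filter.1 hBP
      exact ⟨(hc B hBP'.1 ω hBω hNω).2 hBP'.2, hNω⟩
  have hμSU : μ S = μ U := by
    rw [← measure_diff_null (s := S) hN, hSU, measure_diff_null hN]
  have hdisj : (↑(P.filter c) : Set (Finset (Fin n))).PairwiseDisjoint (evB T j) := by
    intro B hB B' hB' hne
    rw [Finset.coe_filter] at hB hB'
    refine Set.disjoint_left.2 fun ω hω hω' => hne ?_
    exact evB_unique (Finset.mem_powerset.1 hB.1) (Finset.mem_powerset.1 hB'.1) hω hω'
  have hmeas : ∀ B ∈ P.filter c, MeasurableSet (evB T j B) := fun B _ => evB_meas hT j B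
  rw [hμSU, hU, measure_biUnion_finset hdisj hmeas,
    ENNReal.toReal_sum (fun B _ => measure_ne_top μ _), Finset.sum_filter]

end BPaux

theorem stmt_7 {Ω : Type*} [MeasurableSpace Ω] (μ : Measure Ω) [IsProbabilityMeasure μ]
    {n : ℕ} (T : Fin n → Ω → ℝ) (hTmeas : ∀ i, Measurable (T i))
    (hTnonneg : ∀ i ω, 0 ≤ T i ω)
    (hties : ∀ i j : Fin n, i ≠ j → μ {ω | T i ω = T j ω} = 0)
    (φ : Finset (Fin n) → ℝ)
    (hφ01 : ∀ A, φ A = 0 ∨ φ A = 1)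
    (hφmono : ∀ A B : Finset (Fin n), A ⊆ B → φ A ≤ φ B)
    (hφempty : φ ∅ = 0) (hφfull : φ Finset.univ = 1)
    (j : Fin n) :
    (μ {ω | sysLifeOn T Finset.univ φ ω = T j ω}).toReal =
      ∑ A ∈ (Finset.univ : Finset (Fin n)).powerset,
        signedDom φ A * (μ {ω | T j ω = minLifeOn T A ω}).toReal := by
  classical
  set P := (Finset.univ.erase j).powerset with hPdef
  have hPj : ∀ B ∈ P, j ∉ B := by
    intro B hB hjB
    exact (Finset.mem_erase.1 (Finset.mem_powerset.1 hB hjB)).1 rfl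
  -- measure of each minOn-event, case j ∈ A
  have hminOn : ∀ A : Finset (Fin n), j ∈ A →
      (μ {ω | T j ω = minLifeOn T A ω}).toReal
        = ∑ B ∈ P, if A.erase j ⊆ B then (μ (evB T j B)).toReal else 0 := by
    intro A hjA
    refine meas_eq_partition μ hTmeas hties j _ _ ?_
    intro B hBP ω hωB hωN
    have hA : A.Nonempty := ⟨j, hjA⟩
    simp only [Set.mem_setOf_eq, minLifeOn, dif_pos hA]
    constructor
    · intro hS i hi
      obtain ⟨hij, hiA⟩ := Finset.mem_erase.1 hi
      have h1 : T j ω ≤ T i ω := hS ▸ Finset.inf'_le _ hiA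
      have h2 : T j ω ≠ T i ω := fun h => hωN (badN_mem j i (Ne.symm hij) h)
      exact (hωB i hij).1 (lt_of_le_of_ne h1 h2)
    · intro hsub
      refine le_antisymm (Finset.le_inf' hA _ fun i hiA => ?_) (Finset.inf'_le _ hjA)
      by_cases hij : i = j
      · exact le_of_eq (by rw [hij])
      · exact le_of_lt ((hωB i hij).2 (hsub (Finset.mem_erase.2 ⟨hij, hiA⟩)))
  -- measure of each minOn-event is zero when j ∉ A, A nonempty
  have hminOn0 : ∀ A : Finset (Fin n), j ∉ A → A.Nonempty →
      μ {ω | T j ω = minLifeOn T A ω} = 0 := by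
    intro A hjA hA
    refine measure_mono_null (fun ω hω => ?_) (badN_null μ T hties)
    simp only [Set.mem_setOf_eq, minLifeOn, dif_pos hA] at hω
    obtain ⟨i, hiA, hieq⟩ := Finset.exists_mem_eq_inf' hA (fun i => T i ω)
    exact badN_mem j i (fun h => hjA (h ▸ hiA)) (by rw [hω, hieq])
  -- measure of the system-lifetime event
  have hsys : (μ {ω | sysLifeOn T Finset.univ φ ω = T j ω}).toReal
      = ∑ B ∈ P, if φ (insert j B) = 1 ∧ φ B = 0 then (μ (evB T j B)).toReal else 0 := by
    refine meas_eq_partition μ hTmeas hties j _ _ ?_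
    intro B hBP ω hωB hωN
    have hjB : j ∉ B := hPj B hBP
    have hBj : ∀ i ∈ B, i ≠ j := fun i hi hij =>
      (Finset.mem_erase.1 (Finset.mem_powerset.1 hBP hi)).1 hij
    set F := (Finset.univ : Finset (Fin n)).powerset.filter (fun A => φ A = 1) with hF
    have hne : F.Nonempty := ⟨Finset.univ, by simp [hF, hφfull]⟩
    have hFne : ∀ A ∈ F, A.Nonempty := by
      intro A hA
      rcases Finset.eq_empty_or_nonempty A with rfl | h
      · exact absurd ((Finset.mem_filter.1 hA).2) (by rw [hφempty]; norm_num)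
      · exact h
    have hsl : sysLifeOn T Finset.univ φ ω
        = F.sup' hne (fun A => if hA : A.Nonempty then A.inf' hA fun i => T i ω else 0) := by
      rw [sysLifeOn, dif_pos]
    simp only [Set.mem_setOf_eq, hsl]
    constructor
    · intro hS
      have hφB0 : φ B = 0 := by
        rcases hφ01 B with h | h
        · exact h
        · exfalso
          have hBF : B ∈ F := Finset.mem_filter.2 ⟨Finset.mem_powerset.2 (Finset.subset_univ B), h⟩
          have hBne : B.Nonempty := hFne B hBF
          have hlt : T j ω < B.inf' hBne fun i => T i ω := by
            rw [Finset.lt_inf'_iff]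
            intro i hi
            exact (hωB i (hBj i hi)).2 hi
          have hle := Finset.le_sup' (f := fun A => if hA : A.Nonempty
            then A.inf' hA fun i => T i ω else 0) hBF
          rw [dif_pos hBne] at hle
          rw [hS] at hle
          exact absurd (lt_of_lt_of_le hlt hle) (lt_irrefl _)
      refine ⟨?_, hφB0⟩
      obtain ⟨A0, hA0F, hA0eq⟩ := Finset.exists_mem_eq_sup' hne
        (fun A => if hA : A.Nonempty then A.inf' hA fun i => T i ω else 0)
      have hA0ne : A0.Nonempty := hFne A0 hA0F
      rw [hA0eq, dif_pos hA0ne] at hS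
      obtain ⟨i0, hi0, hi0eq⟩ := Finset.exists_mem_eq_inf' hA0ne (fun i => T i ω)
      have hi0j : i0 = j := by
        by_contra h
        exact hωN (badN_mem i0 j h (by rw [← hi0eq, hS]))
      have hsub : A0 ⊆ insert j B := by
        intro i hi
        by_cases hij : i = j
        · exact hij ▸ Finset.mem_insert_self j B
        · refine Finset.mem_insert_of_mem ((hωB i hij).1 ?_)
          have h1 : T j ω ≤ T i ω := by
            rw [← hS]; exact Finset.inf'_le _ hi
          exact lt_of_le_of_ne h1 (fun h => hωN (badN_mem j i (Ne.symm hij) h))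
      have h1 : (1 : ℝ) ≤ φ (insert j B) := by
        have := hφmono A0 (insert j B) hsub
        rw [(Finset.mem_filter.1 hA0F).2] at this
        exact this
      rcases hφ01 (insert j B) with h | h
      · exfalso; rw [h] at h1; norm_num at h1
      · exact h
    · rintro ⟨h1, h0⟩
      have hIF : insert j B ∈ F :=
        Finset.mem_filter.2 ⟨Finset.mem_powerset.2 (Finset.subset_univ _), h1⟩
      have hIne : (insert j B).Nonempty := ⟨j, Finset.mem_insert_self j B⟩
      refine le_antisymm (Finset.sup'_le _ _ fun A hAF => ?_) ?_
      · have hAne : A.Nonempty := hFne A hAF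
        rw [dif_pos hAne]
        by_contra h
        push_neg at h
        have hsub : A ⊆ B := by
          intro i hi
          have hlt : T j ω < T i ω := lt_of_lt_of_le h (Finset.inf'_le _ hi)
          have hij : i ≠ j := fun he => absurd (he ▸ hlt) (lt_irrefl _)
          exact (hωB i hij).1 hlt
        have := hφmono A B hsub
        rw [(Finset.mem_filter.1 hAF).2, h0] at this
        norm_num at this
      · have hle : T j ω ≤ (insert j B).inf' hIne fun i => T i ω := by
          refine Finset.le_inf' _ _ fun i hi => ?_
          rcases Finset.mem_insert.1 hi with rfl | hiB
          · exact le_rfl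
          · exact le_of_lt ((hωB i (hBj i hiB)).2 hiB)
        have := Finset.le_sup' (f := fun A => if hA : A.Nonempty
          then A.inf' hA fun i => T i ω else 0) hIF
        rw [dif_pos hIne] at this
        exact le_trans hle this
  -- rewrite the RHS term-by-term
  have hterm : ∀ A ∈ (Finset.univ : Finset (Fin n)).powerset,
      signedDom φ A * (μ {ω | T j ω = minLifeOn T A ω}).toReal
        = ∑ B ∈ P, if j ∈ A ∧ A.erase j ⊆ B then signedDom φ A * (μ (evB T j B)).toReal
            else 0 := by
    intro A _
    by_cases hjA : j ∈ A
    · rw [hminOn A hjA, Finset.mul_sum]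
      refine Finset.sum_congr rfl fun B _ => ?_
      by_cases h : A.erase j ⊆ B <;> simp [h, hjA]
    · rcases Finset.eq_empty_or_nonempty A with rfl | hA
      · rw [signedDom_empty φ hφempty]
        simp
      · rw [hminOn0 A hjA hA]
        simp [hjA]
  rw [hsys, Finset.sum_congr rfl hterm, Finset.sum_comm]
  refine Finset.sum_congr rfl fun B hBP => ?_
  have hjB : j ∉ B := hPj B hBP
  -- compute the inner sum over A
  have hinner : (∑ A ∈ (Finset.univ : Finset (Fin n)).powerset,
      if j ∈ A ∧ A.erase j ⊆ B then signedDom φ A * (μ (evB T j B)).toReal else 0)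
        = (φ (insert j B) - φ B) * (μ (evB T j B)).toReal := by
    rw [Finset.sum_ite, Finset.sum_const_zero, add_zero, ← Finset.sum_mul]
    congr 1
    have hfe : (Finset.univ : Finset (Fin n)).powerset.filter
        (fun A => j ∈ A ∧ A.erase j ⊆ B) = (insert j B).powerset.filter (fun A => j ∈ A) := by
      ext A
      simp only [Finset.mem_filter, Finset.mem_powerset]
      constructor
      · rintro ⟨-, hjA, hsub⟩
        refine ⟨fun i hi => ?_, hjA⟩
        by_cases hij : i = j
        · exact hij ▸ Finset.mem_insert_self j B
        · exact Finset.mem_insert_of_mem (hsub (Finset.mem_erase.2 ⟨hij, hi⟩))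
      · rintro ⟨hsub, hjA⟩
        refine ⟨Finset.subset_univ A, hjA, fun i hi => ?_⟩
        obtain ⟨hij, hiA⟩ := Finset.mem_erase.1 hi
        rcases Finset.mem_insert.1 (hsub hiA) with h | h
        · exact absurd h hij
        · exact h
    rw [hfe]
    have hsplit := Finset.sum_filter_add_sum_filter_not (insert j B).powerset
      (fun A => j ∈ A) (signedDom φ)
    have hBpow : (insert j B).powerset.filter (fun A => ¬ j ∈ A) = B.powerset := by
      ext A
      simp only [Finset.mem_filter, Finset.mem_powerset]
      constructor
      · rintro ⟨hsub, hjA⟩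
        intro i hi
        rcases Finset.mem_insert.1 (hsub hi) with rfl | h
        · exact absurd hi hjA
        · exact h
      · intro hsub
        exact ⟨hsub.trans (Finset.subset_insert j B), fun hjA => hjB (hsub hjA)⟩
    rw [hBpow, sum_signedDom, sum_signedDom] at hsplit
    linarith
  rw [hinner]
  -- match the indicator with the difference of φ values
  have hmono := hφmono B (insert j B) (Finset.subset_insert j B)
  rcases hφ01 (insert j B) with h1 | h1 <;> rcases hφ01 B with h2 | h2 <;>
    simp [h1, h2] <;> first
      | (rw [h1, h2] at hmono; norm_num at hmono)
      | norm_num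
end
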